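/- Let A be a finite union of bounded intervals with nonempty interior and p ∈ (0,1). Define φ_A(r,x) = ν((A − x)/√(1−r)) for r ∈ [0,1), x ∈ ℝ, where ν is the standard Gaussian measure. If the set {(r,x) : φ_A(r,x) ≥ p} is nonempty, then J̃_A(p) := inf{r ∈ [0,1) : ∃x, φ_A(r,x) ≥ p} is attained: there exist r = J̃_A(p) and x ∈ ℝ with φ_A(r,x) ≥ p. -/

import Mathlib

open MeasureTheory ProbabilityTheory Set Real Filter
open scoped ENNReal NNReal

lemma aux_img (x s : ℝ) (hs : 0 < s) (A : Set ℝ) :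
    (fun a => (a - x) / s) '' A = (fun t => s * t + x) ⁻¹' A := by
  ext y
  simp only [Set.mem_image, Set.mem_preimage]
  constructor
  · rintro ⟨a, ha, rfl⟩
    have : s * ((a - x) / s) + x = a := by field_simp; ring
    rwa [this]
  · intro h
    exact ⟨s * y + x, h, by field_simp; ring⟩

lemma aux_phi_eq (A : Set ℝ) (hA : MeasurableSet A) (r x : ℝ) (hr : r < 1) :
    ((gaussianReal 0 1) ((fun a => (a - x) / Real.sqrt (1 - r)) '' A)).toReal
      = ∫ a in A, (Real.sqrt (2 * π * (1 - r)))⁻¹ * Real.exp (-(a - x) ^ 2 / (2 * (1 - r))) := by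
  have h1 : (0:ℝ) < 1 - r := by linarith
  have hs : 0 < Real.sqrt (1 - r) := Real.sqrt_pos.mpr h1
  rw [aux_img x _ hs]
  set s := Real.sqrt (1 - r) with hs_def
  have hv : (⟨1 - r, h1.le⟩ : NNReal) ≠ 0 := by
    intro h
    exact h1.ne' (congrArg NNReal.toReal h)
  have hmap : Measure.map (fun t => s * t + x) (gaussianReal 0 1)
      = gaussianReal x ⟨1 - r, h1.le⟩ := by
    have hcomp : (fun t : ℝ => s * t + x) = ((· + x) ∘ (s * ·)) := rfl
    rw [hcomp, ← Measure.map_map (measurable_add_const x) (measurable_const_mul s),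
      gaussianReal_map_const_mul, gaussianReal_map_add_const]
    congr 1
    · ring
    · ext
      simp [hs_def, Real.sq_sqrt h1.le]; rfl
  have hpre : (gaussianReal 0 1) ((fun t => s * t + x) ⁻¹' A)
      = gaussianReal x ⟨1 - r, h1.le⟩ A := by
    rw [← hmap, Measure.map_apply (by fun_prop) hA]
  rw [hpre, gaussianReal_apply_eq_integral x hv A,
    ENNReal.toReal_ofReal ?_]
  · rfl
  · exact setIntegral_nonneg hA fun a _ => gaussianPDFReal_nonneg _ _ _

lemma aux_cont (A : Set ℝ) (hfin : MeasureTheory.volume A ≠ ⊤) (r₀ x₀ : ℝ) (hr : r₀ < 1) :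
    ContinuousAt (fun q : ℝ × ℝ =>
      ∫ a in A, (Real.sqrt (2 * π * (1 - q.1)))⁻¹ * Real.exp (-(a - q.2) ^ 2 / (2 * (1 - q.1))))
      (r₀, x₀) := by
  set R : ℝ := (1 + r₀) / 2 with hR
  have hr₀R : r₀ < R := by rw [hR]; linarith
  have hR1 : R < 1 := by rw [hR]; linarith
  have hpos : (0:ℝ) < 2 * π * (1 - R) := by
    have := Real.pi_pos; nlinarith
  apply continuousAt_of_dominated (bound := fun _ => (Real.sqrt (2 * π * (1 - R)))⁻¹)
  · filter_upwards with q
    exact (Continuous.aestronglyMeasurable (by fun_prop))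
  · have hev : ∀ᶠ q : ℝ × ℝ in nhds (r₀, x₀), q.1 < R :=
      (continuous_fst.tendsto (r₀, x₀)).eventually (eventually_lt_nhds hr₀R)
    filter_upwards [hev] with q hq
    apply ae_of_all
    intro a
    have h1 : (0:ℝ) < 1 - q.1 := by linarith
    have hle : Real.sqrt (2 * π * (1 - R)) ≤ Real.sqrt (2 * π * (1 - q.1)) := by
      apply Real.sqrt_le_sqrt; nlinarith [Real.pi_pos]
    have hsq : 0 < Real.sqrt (2 * π * (1 - R)) := Real.sqrt_pos.mpr hpos
    have hexp : Real.exp (-(a - q.2) ^ 2 / (2 * (1 - q.1))) ≤ 1 := by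
      rw [Real.exp_le_one_iff]
      apply div_nonpos_of_nonpos_of_nonneg
      · nlinarith [sq_nonneg (a - q.2)]
      · linarith
    have hnn : 0 ≤ (Real.sqrt (2 * π * (1 - q.1)))⁻¹ * Real.exp (-(a - q.2) ^ 2 / (2 * (1 - q.1))) :=
      mul_nonneg (inv_nonneg.mpr (Real.sqrt_nonneg _)) (Real.exp_pos _).le
    rw [Real.norm_eq_abs, abs_of_nonneg hnn]
    calc (Real.sqrt (2 * π * (1 - q.1)))⁻¹ * Real.exp (-(a - q.2) ^ 2 / (2 * (1 - q.1)))
        ≤ (Real.sqrt (2 * π * (1 - q.1)))⁻¹ * 1 := by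
          apply mul_le_mul_of_nonneg_left hexp (inv_nonneg.mpr (Real.sqrt_nonneg _))
      _ = (Real.sqrt (2 * π * (1 - q.1)))⁻¹ := mul_one _
      _ ≤ (Real.sqrt (2 * π * (1 - R)))⁻¹ := inv_anti₀ hsq hle
  · exact ((integrableOn_const_iff (by simp)).mpr (Or.inr hfin.lt_top))
  · apply ae_of_all
    intro a
    have h1 : (0:ℝ) < 1 - r₀ := by linarith
    have hpos' : (0:ℝ) < 2 * π * (1 - r₀) := by nlinarith [Real.pi_pos]
    have hc1 : ContinuousAt (fun q : ℝ × ℝ => (Real.sqrt (2 * π * (1 - q.1)))⁻¹) (r₀, x₀) := by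
      apply ContinuousAt.inv₀
      · fun_prop
      · exact (Real.sqrt_pos.mpr hpos').ne'
    have hc2 : ContinuousAt
        (fun q : ℝ × ℝ => Real.exp (-(a - q.2) ^ 2 / (2 * (1 - q.1)))) (r₀, x₀) := by
      apply Real.continuous_exp.continuousAt.comp
      apply ContinuousAt.div
      · fun_prop
      · fun_prop
      · simpa using h1.ne'
    exact hc1.mul hc2

theorem gaussian_dilation_inf_attained (A : Set ℝ) (p : ℝ) (hp : p ∈ Set.Ioo (0 : ℝ) 1)
    (hA : ∃ (n : ℕ) (I : Fin n → Set ℝ),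
      (∀ i, ∃ a b : ℝ, a < b ∧ Set.Ioo a b ⊆ I i ∧ I i ⊆ Set.Icc a b) ∧ A = ⋃ i, I i)
    (hne : {r : ℝ | r ∈ Set.Ico (0 : ℝ) 1 ∧ ∃ x : ℝ,
        p ≤ ((gaussianReal 0 1)
          ((fun a => (a - x) / Real.sqrt (1 - r)) '' A)).toReal}.Nonempty) :
    ∃ x : ℝ, p ≤ ((gaussianReal 0 1)
      ((fun a => (a - x) / Real.sqrt (1 - sInf {r : ℝ | r ∈ Set.Ico (0 : ℝ) 1 ∧ ∃ x : ℝ,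
        p ≤ ((gaussianReal 0 1)
          ((fun a => (a - x) / Real.sqrt (1 - r)) '' A)).toReal})) '' A)).toReal := by
  obtain ⟨n, I, hI, hAeq⟩ := hA
  choose a b hab hsub hsup using hI
  -- n is positive, else contradiction with hne
  have hnpos : 0 < n := by
    by_contra h
    push_neg at h
    interval_cases n
    have hAempty : A = ∅ := by
      rw [hAeq]; exact Set.iUnion_of_empty I
    obtain ⟨r, _, x, hx⟩ := hne
    rw [hAempty] at hx
    simp at hx
    linarith [hp.1]
  -- A is measurable
  have hAmeas : MeasurableSet A := by
    rw [hAeq]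
    apply MeasurableSet.iUnion
    intro i
    have hIi : I i = Set.Ioo (a i) (b i) ∪ (I i \ Set.Ioo (a i) (b i)) :=
      (Set.union_diff_cancel (hsub i)).symm
    rw [hIi]
    apply measurableSet_Ioo.union
    apply Set.Countable.measurableSet
    apply Set.Countable.mono (s₂ := {a i, b i})
    · rintro t ⟨ht, htn⟩
      have h2 := hsup i ht
      rw [Set.mem_Icc] at h2
      simp only [Set.mem_Ioo, not_and_or, not_lt] at htn
      rcases htn with h | h
      · left; linarith
      · right; simp; linarith
    · exact (Set.countable_singleton (b i)).insert (a i)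
  -- bound M for A
  have hFinNe : (Finset.univ : Finset (Fin n)).Nonempty := by
    simpa [Finset.univ_nonempty_iff] using Fin.pos_iff_nonempty.mp hnpos
  set M : ℝ := Finset.univ.sup' hFinNe (fun i => max |a i| |b i|) with hM
  have hMnn : 0 ≤ M := by
    obtain ⟨i, _⟩ := hFinNe
    exact le_trans (le_max_of_le_left (abs_nonneg _))
      (Finset.le_sup' (fun i => max |a i| |b i|) (Finset.mem_univ i))
  have hAM : A ⊆ Set.Icc (-M) M := by
    intro t ht
    rw [hAeq] at ht
    obtain ⟨s, ⟨i, rfl⟩, hts⟩ := ht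
    have h2 := hsup i hts
    rw [Set.mem_Icc] at h2 ⊢
    have hsup' : max |a i| |b i| ≤ M :=
      Finset.le_sup' (fun i => max |a i| |b i|) (Finset.mem_univ i)
    constructor
    · have : |a i| ≤ M := le_trans (le_max_left _ _) hsup'
      have := abs_le.mp this
      linarith [h2.1]
    · have : |b i| ≤ M := le_trans (le_max_right _ _) hsup'
      have := abs_le.mp this
      linarith [h2.2]
  have hfin : MeasureTheory.volume A ≠ ⊤ :=
    ((measure_mono hAM).trans_lt measure_Icc_lt_top).ne
  -- the set S and its infimum
  set S : Set ℝ := {r : ℝ | r ∈ Set.Ico (0 : ℝ) 1 ∧ ∃ x : ℝ,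
      p ≤ ((gaussianReal 0 1)
        ((fun a => (a - x) / Real.sqrt (1 - r)) '' A)).toReal} with hSdef
  have hbdd : BddBelow S := ⟨0, fun r hr => hr.1.1⟩
  obtain ⟨rstar, hrstar⟩ := hne
  have hr₀0 : 0 ≤ sInf S := le_csInf ⟨rstar, hrstar⟩ (fun r hr => hr.1.1)
  have hr₀lt : sInf S < 1 := lt_of_le_of_lt (csInf_le hbdd hrstar) hrstar.1.2
  -- find T with small tail mass
  have hiInter : ⋂ m : ℕ, (Set.Iic (-(m:ℝ)) ∪ Set.Ici (m:ℝ)) = ∅ := by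
    rw [Set.eq_empty_iff_forall_notMem]
    intro t ht
    obtain ⟨m, hm⟩ := exists_nat_gt |t|
    have := Set.mem_iInter.mp ht m
    rcases this with h | h
    · rw [Set.mem_Iic] at h
      have := neg_abs_le t
      linarith
    · rw [Set.mem_Ici] at h
      have := le_abs_self t
      linarith
  have htendT : Tendsto (fun m : ℕ => (gaussianReal 0 1) (Set.Iic (-(m:ℝ)) ∪ Set.Ici (m:ℝ)))
      atTop (nhds 0) := by
    have := tendsto_measure_iInter_atTop (μ := gaussianReal 0 1)
      (s := fun m : ℕ => Set.Iic (-(m:ℝ)) ∪ Set.Ici (m:ℝ))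
      (fun m => (measurableSet_Iic.union measurableSet_Ici).nullMeasurableSet)
      (fun m₁ m₂ h => by
        apply Set.union_subset_union
        · apply Set.Iic_subset_Iic.mpr; simp; exact_mod_cast h
        · apply Set.Ici_subset_Ici.mpr; exact_mod_cast h)
      ⟨0, measure_ne_top _ _⟩
    rwa [hiInter, measure_empty] at this
  have hppos : (0:ℝ≥0∞) < ENNReal.ofReal p := ENNReal.ofReal_pos.mpr hp.1
  obtain ⟨T, hT⟩ := (htendT.eventually_lt_const hppos).exists
  have hTnn : (0:ℝ) ≤ (T:ℝ) := Nat.cast_nonneg T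
  -- key bound: any witness x satisfies |x| ≤ M + T
  have key : ∀ r ∈ Set.Ico (0:ℝ) 1, ∀ x : ℝ,
      p ≤ ((gaussianReal 0 1) ((fun a => (a - x) / Real.sqrt (1 - r)) '' A)).toReal →
      |x| ≤ M + T := by
    intro r hr x hx
    by_contra hcon
    push_neg at hcon
    have h1 : (0:ℝ) < 1 - r := by linarith [hr.2]
    have hs0 : 0 < Real.sqrt (1 - r) := Real.sqrt_pos.mpr h1
    have hs1 : Real.sqrt (1 - r) ≤ 1 := by
      calc Real.sqrt (1 - r) ≤ Real.sqrt 1 := Real.sqrt_le_sqrt (by linarith [hr.1])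
        _ = 1 := Real.sqrt_one
    set s := Real.sqrt (1 - r)
    rw [aux_img x s hs0 A] at hx
    have hsubset : (fun t => s * t + x) ⁻¹' A ⊆ Set.Iic (-(T:ℝ)) ∪ Set.Ici (T:ℝ) := by
      intro t ht
      rw [Set.mem_preimage] at ht
      have hmem := hAM ht
      rw [Set.mem_Icc] at hmem
      rcases lt_abs.mp hcon with hxp | hxn
      · -- x > M + T : s t + x ≤ M so s t ≤ M - x < -T
        left
        rw [Set.mem_Iic]
        have h2 : s * t ≤ M - x := by linarith [hmem.2]
        have h3 : M - x < -(T:ℝ) := by linarith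
        have ht0 : t < 0 := by nlinarith
        nlinarith [mul_nonneg (neg_nonneg.mpr ht0.le) (sub_nonneg.mpr hs1)]
      · -- x < -(M+T) : s t + x ≥ -M so s t ≥ -M - x > T
        right
        rw [Set.mem_Ici]
        have h2 : -M - x ≤ s * t := by linarith [hmem.1]
        have h3 : (T:ℝ) < -M - x := by linarith
        have ht0 : 0 < t := by nlinarith
        nlinarith [mul_nonneg ht0.le (sub_nonneg.mpr hs1)]
    have hle : (gaussianReal 0 1) ((fun t => s * t + x) ⁻¹' A)
        ≤ (gaussianReal 0 1) (Set.Iic (-(T:ℝ)) ∪ Set.Ici (T:ℝ)) := measure_mono hsubset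
    have hlt : ((gaussianReal 0 1) ((fun t => s * t + x) ⁻¹' A)).toReal < p := by
      have h4 : (gaussianReal 0 1) ((fun t => s * t + x) ⁻¹' A) < ENNReal.ofReal p :=
        lt_of_le_of_lt hle hT
      exact ENNReal.toReal_lt_of_lt_ofReal h4
    linarith
  -- sequence in S converging to sInf S
  obtain ⟨u, hu_anti, hu_tend, hu_mem⟩ := exists_seq_tendsto_sInf ⟨rstar, hrstar⟩ hbdd
  choose xs hxs using fun k => (hu_mem k).2
  have hxsmem : ∀ k, xs k ∈ Set.Icc (-(M + T)) (M + T) := by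
    intro k
    have := key (u k) (hu_mem k).1 (xs k) (hxs k)
    exact abs_le.mp this |> fun h => Set.mem_Icc.mpr h
  obtain ⟨xlim, hxlimmem, φk, hφmono, hφtend⟩ := isCompact_Icc.tendsto_subseq hxsmem
  -- the pair sequence converges
  have hptend : Tendsto (fun k => (u (φk k), xs (φk k))) atTop (nhds (sInf S, xlim)) :=
    Tendsto.prodMk_nhds (hu_tend.comp hφmono.tendsto_atTop) hφtend
  -- continuity of the integral
  have hcont := aux_cont A hfin (sInf S) xlim hr₀lt
  have hGtend := hcont.tendsto.comp hptend
  -- values along sequence ≥ p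
  have hvals : ∀ k, p ≤ (fun q : ℝ × ℝ =>
      ∫ a in A, (Real.sqrt (2 * π * (1 - q.1)))⁻¹ * Real.exp (-(a - q.2) ^ 2 / (2 * (1 - q.1))))
      (u (φk k), xs (φk k)) := by
    intro k
    have h := hxs (φk k)
    rwa [aux_phi_eq A hAmeas (u (φk k)) (xs (φk k)) (hu_mem (φk k)).1.2] at h
  have hfinal : p ≤ ∫ a in A, (Real.sqrt (2 * π * (1 - sInf S)))⁻¹ *
      Real.exp (-(a - xlim) ^ 2 / (2 * (1 - sInf S))) :=
    ge_of_tendsto' hGtend hvals |> fun h => h  -- p ≤ limit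
  refine ⟨xlim, ?_⟩
  rw [aux_phi_eq A hAmeas (sInf S) xlim hr₀lt]
  exact hfinal
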